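/- Let G be a finite group having a unique minimal normal subgroup N, suppose N is abelian, C_G(N) = N, and G/N is nonabelian. Then for every non-principal irreducible character λ of N, the inertia group I_G(λ) = {g ∈ G : λ^g = λ} is a proper subgroup of G. -/

import Mathlib

/-- The set of (irreducible complex character) codegrees of a group `G`:
for each irreducible representation `V`, the codegree is `|G : ker V| / dim V`. -/
noncomputable def codegrees (G : Type) [Group G] : Set ℕ :=
  { n | ∃ V : FDRep ℂ G, CategoryTheory.Simple V ∧
      n = (MonoidHom.ker (Representation.asGroupHom V.ρ)).index / Module.finrank ℂ V }

open CategoryTheory Module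

section Aux

variable {H : Type} [Group H]

/-- For abelian `H`, each `W.ρ x` defines an endomorphism of `W` in `FDRep ℂ H`. -/
noncomputable def FDRepEndoOf (W : FDRep ℂ H) (hab : ∀ x y : H, x * y = y * x) (x : H) :
    W ⟶ W :=
  Action.Hom.mk (FGModuleCat.ofHom (W.ρ x)) (by
    intro g
    ext v
    change W.ρ x (W.ρ g v) = W.ρ g (W.ρ x v)
    rw [← Module.End.mul_apply, ← Module.End.mul_apply, ← map_mul, ← map_mul, hab])

theorem rho_scalar (W : FDRep ℂ H) [Simple W] (hab : ∀ x y : H, x * y = y * x) (x : H) :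
    ∃ c : ℂ, W.ρ x = c • LinearMap.id := by
  obtain ⟨c, hc⟩ := CategoryTheory.endomorphism_simple_eq_smul_id ℂ (FDRepEndoOf W hab x)
  refine ⟨c, ?_⟩
  have : (FDRepEndoOf W hab x).hom = (c • 𝟙 W).hom := by rw [hc]
  exact congrArg (fun f => f.hom.hom) this

theorem finrank_one_of_comm (W : FDRep ℂ H) [Simple W] (hab : ∀ x y : H, x * y = y * x) :
    finrank ℂ W = 1 := by
  have hsc := rho_scalar W hab
  have e : (W ⟶ W) ≃ₗ[ℂ] (W →ₗ[ℂ] W) :=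
    { toFun := fun f => f.hom.hom.hom
      map_add' := fun f g => rfl
      map_smul' := fun c f => rfl
      invFun := fun f => Action.Hom.mk (FGModuleCat.ofHom f) (by
        intro g
        obtain ⟨c, hc⟩ := hsc g
        ext v
        change f (W.ρ g v) = W.ρ g (f v)
        rw [hc]; simp)
      left_inv := fun f => rfl
      right_inv := fun f => rfl }
  have h1 : finrank ℂ (W ⟶ W) = 1 := CategoryTheory.finrank_endomorphism_simple_eq_one ℂ W
  have h2 : finrank ℂ (W →ₗ[ℂ] W) = finrank ℂ W * finrank ℂ W := Module.finrank_linearMap ℂ ℂ W W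
  have := e.finrank_eq
  rw [h1, h2] at this
  nlinarith [this]

theorem rho_eq_char_smul (W : FDRep ℂ H) [Simple W] (hab : ∀ x y : H, x * y = y * x) (x : H) :
    W.ρ x = (W.character x) • LinearMap.id := by
  obtain ⟨c, hc⟩ := rho_scalar W hab x
  have hd : finrank ℂ W = 1 := finrank_one_of_comm W hab
  have : W.character x = c := by
    rw [FDRep.character, hc]
    rw [map_smul, LinearMap.trace_id, hd]
    simp
  rw [this, hc]

theorem char_mul_of_comm (W : FDRep ℂ H) [Simple W] (hab : ∀ x y : H, x * y = y * x) (x y : H) :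
    W.character (x * y) = W.character x * W.character y := by
  have hd : finrank ℂ W = 1 := finrank_one_of_comm W hab
  have hx := rho_eq_char_smul W hab x
  have hy := rho_eq_char_smul W hab y
  rw [FDRep.character, map_mul, hx, hy]
  rw [smul_mul_assoc, mul_smul_comm, Module.End.mul_eq_comp, LinearMap.id_comp,
    smul_smul, map_smul, LinearMap.trace_id, hd]
  simp [mul_comm]

end Aux


/-- Let `G` be a finite group with a unique minimal normal subgroup `N`, with `N` abelian,
`C_G(N) = N`, and `G/N` nonabelian. Then for every non-principal irreducible character `λ`
of `N` (here realized as the character of a simple representation `W`), the inertia group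
`I_G(λ)` is proper, i.e. some `g : G` does not fix `λ` under conjugation. -/
theorem inertia_proper_of_unique_minimal_normal
    (G : Type) [Group G] [Finite G] (N : Subgroup G) (hN : N.Normal) (hNbot : N ≠ ⊥)
    (huniq : ∀ M : Subgroup G, M.Normal → M ≠ ⊥ → N ≤ M)
    (hab : ∀ x y : N, x * y = y * x)
    (hcent : Subgroup.centralizer (N : Set G) = N)
    (hquot : ¬ ∀ x y : G ⧸ N, x * y = y * x)
    (W : FDRep ℂ N) (hW : CategoryTheory.Simple W)
    (hnonprin : ∃ x : N, W.character x ≠ 1) :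
    ∃ g : G, ∃ x : N,
      W.character ⟨g⁻¹ * ↑x * g, hN.conj_mem' ↑x x.2 g⟩ ≠ W.character x := by
  haveI := hW
  by_contra hcon
  push_neg at hcon
  -- the character as a monoid homomorphism
  have hd : finrank ℂ W = 1 := finrank_one_of_comm W hab
  set χ : N →* ℂ :=
    { toFun := fun x => W.character x
      map_one' := by show W.character 1 = 1; rw [FDRep.char_one, hd]; norm_num
      map_mul' := fun x y => char_mul_of_comm W hab x y } with hχ
  have hχx : ∀ x : N, χ x = W.character x := fun _ => rfl
  -- χ values are invertible
  have hinv : ∀ x : N, χ x⁻¹ * χ x = 1 := by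
    intro x
    rw [← map_mul, inv_mul_cancel, map_one]
  -- the kernel as a subgroup of G
  set K : Subgroup G := Subgroup.map N.subtype χ.ker with hK
  have hKmem : ∀ x : N, (x : G) ∈ K ↔ χ x = 1 := by
    intro x
    constructor
    · rintro ⟨y, hy, h⟩
      have : y = x := Subtype.ext h
      rw [← this]; exact hy
    · intro h; exact ⟨x, h, rfl⟩
  -- K is normal in G
  have hKnormal : K.Normal := by
    constructor
    rintro a ⟨x, hx, rfl⟩ g
    have hmem : g * (x : G) * g⁻¹ ∈ N := by
      have := hN.conj_mem' (x : G) x.2 g⁻¹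
      simpa using this
    refine ⟨⟨g * (x : G) * g⁻¹, hmem⟩, ?_, rfl⟩
    show χ _ = 1
    have := hcon g⁻¹ x
    have h2 : (⟨g⁻¹⁻¹ * (x : G) * g⁻¹, hN.conj_mem' (x : G) x.2 g⁻¹⟩ : N)
        = ⟨g * (x : G) * g⁻¹, hmem⟩ := by
      ext; simp
    rw [h2] at this
    rw [hχx, this, ← hχx]
    exact hx
  by_cases hKbot : K = ⊥
  · -- kernel trivial: G centralizes N, so N = ⊤, so G/N trivial, contradicting hquot
    have hNtop : N = ⊤ := by
      rw [eq_top_iff]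
      intro g _
      rw [← hcent]
      rw [Subgroup.mem_centralizer_iff]
      intro n hn
      set x : N := ⟨n, hn⟩ with hx
      set y : N := ⟨g⁻¹ * n * g, hN.conj_mem' n hn g⟩ with hy
      have hchar : χ y = χ x := hcon g x
      have : χ (y * x⁻¹) = 1 := by
        rw [map_mul, hchar, ← map_mul, mul_inv_cancel, map_one]
      have hmem : ((y * x⁻¹ : N) : G) ∈ K := (hKmem _).mpr this
      rw [hKbot, Subgroup.mem_bot] at hmem
      have : (y : G) = (x : G) := by
        have := mul_eq_one_iff_eq_inv.mp hmem
        have h2 : (y : G) = ((x⁻¹ : N) : G)⁻¹ := by rw [← this]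
        simpa using h2
      have hyx : g⁻¹ * n * g = n := this
      calc n * g = g * (g⁻¹ * n * g) := by group
        _ = g * n := by rw [hyx]
    have htriv : ∀ z : G ⧸ N, z = 1 := by
      intro z
      induction z using QuotientGroup.induction_on with
      | H g => exact (QuotientGroup.eq_one_iff g).mpr (by rw [hNtop]; trivial)
    exact hquot (fun a b => by rw [htriv a, htriv b])
  · -- kernel nontrivial: N ≤ K, so χ is trivial, contradicting hnonprin
    have hNK : N ≤ K := huniq K hKnormal hKbot
    obtain ⟨x0, hx0⟩ := hnonprin
    have : (x0 : G) ∈ K := hNK x0.2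
    exact hx0 ((hKmem x0).mp this)
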